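/- arXiv:1804.06146 — 3 statements merged into one kernel-verified Lean document; each statement's English description precedes it below -/
import Mathlib

section
/- For every integer n ≥ 3, the numerical semigroup S generated by n², n²+1, n²+n, n²+n+1 is A-graded, and its conductor satisfies c = n_0·g_0 with g_0 = n² and n_0 = n−1, i.e., c = (n−1)·n². -/
/-- The conductorN of `S ⊆ ℕ`: the smallest `m` such that every `n ≥ m` lies in `S`. -/
noncomputable def conductorN (S : Set ℕ) : ℕ :=
  sInf {m : ℕ | ∀ n : ℕ, m ≤ n → n ∈ S}

/-- The multiplicity of `S ⊆ ℕ`: its smallest positive element. -/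
noncomputable def multiplicityN (S : Set ℕ) : ℕ :=
  sInf {s ∈ S | 0 < s}

/-- The Apéry set of `S` with respect to its multiplicity `g₀`:
elements `s ∈ S` with `s - g₀ ∉ S`. -/
def aperySet (S : Set ℕ) : Set ℕ :=
  {s ∈ S | ∀ t ∈ S, s ≠ t + multiplicityN S}

/-- With `n₀ = ⌈c/g₀⌉` and `ρ = n₀·g₀ - c`, the piece
`A_i = {a ∈ A | ⌊(a+ρ)/g₀⌋ = i}` of the Apéry set. -/
noncomputable def aperyPiece (S : Set ℕ) (i : ℕ) : Set ℕ :=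
  {a ∈ aperySet S |
    (a + ((conductorN S ⌈/⌉ multiplicityN S) * multiplicityN S - conductorN S)) /
      multiplicityN S = i}

/-- `S` is `A`-graded if `(A_i + A_j) ∩ A ⊆ A_{i+j}` for all `i, j ∈ ℕ`. -/
def IsAGraded (S : Set ℕ) : Prop :=
  ∀ i j : ℕ, ∀ a ∈ aperyPiece S i, ∀ b ∈ aperyPiece S j,
    a + b ∈ aperySet S → a + b ∈ aperyPiece S (i + j)

namespace Stmt17Aux

def gens (n : ℕ) : Set ℕ := {n ^ 2, n ^ 2 + 1, n ^ 2 + n, n ^ 2 + n + 1}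

def T (n : ℕ) : Set ℕ := ((AddSubmonoid.closure (gens n) : AddSubmonoid ℕ) : Set ℕ)

lemma rep_mem (n : ℕ) : ∀ k a b : ℕ, a ≤ k → b ≤ k →
    k * n ^ 2 + b * n + a ∈ AddSubmonoid.closure (gens n) := by
  intro k
  induction k with
  | zero =>
    intro a b ha hb
    have : a = 0 := Nat.le_zero.mp ha
    have hb0 : b = 0 := Nat.le_zero.mp hb
    subst this; subst hb0; simpa using zero_mem _
  | succ k ih =>
    intro a b ha hb
    have h1 : n ^ 2 ∈ AddSubmonoid.closure (gens n) :=
      AddSubmonoid.subset_closure (by simp [gens])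
    have h2 : n ^ 2 + 1 ∈ AddSubmonoid.closure (gens n) :=
      AddSubmonoid.subset_closure (by simp [gens])
    have h3 : n ^ 2 + n ∈ AddSubmonoid.closure (gens n) :=
      AddSubmonoid.subset_closure (by simp [gens])
    have h4 : n ^ 2 + n + 1 ∈ AddSubmonoid.closure (gens n) :=
      AddSubmonoid.subset_closure (by simp [gens])
    match a, b with
    | 0, 0 =>
      have h : (k+1) * n^2 + 0*n + 0 = n^2 + (k*n^2 + 0*n + 0) := by ring
      rw [h]; exact add_mem h1 (ih 0 0 (by omega) (by omega))
    | 0, b+1 =>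
      have h : (k+1) * n^2 + (b+1)*n + 0 = (n^2+n) + (k*n^2 + b*n + 0) := by ring
      rw [h]; exact add_mem h3 (ih 0 b (by omega) (by omega))
    | a+1, 0 =>
      have h : (k+1) * n^2 + 0*n + (a+1) = (n^2+1) + (k*n^2 + 0*n + a) := by ring
      rw [h]; exact add_mem h2 (ih a 0 (by omega) (by omega))
    | a+1, b+1 =>
      have h : (k+1) * n^2 + (b+1)*n + (a+1) = (n^2+n+1) + (k*n^2 + b*n + a) := by ring
      rw [h]; exact add_mem h4 (ih a b (by omega) (by omega))

lemma mem_S (n m : ℕ) : m ∈ T n ↔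
    ∃ k a b, a ≤ k ∧ b ≤ k ∧ m = k * n ^ 2 + b * n + a := by
  constructor
  · intro hm
    rw [T, SetLike.mem_coe] at hm
    induction hm using AddSubmonoid.closure_induction with
    | mem x hx =>
      simp only [gens, Set.mem_insert_iff, Set.mem_singleton_iff] at hx
      rcases hx with rfl | rfl | rfl | rfl
      · exact ⟨1, 0, 0, by omega, by omega, by ring⟩
      · exact ⟨1, 1, 0, by omega, by omega, by ring⟩
      · exact ⟨1, 0, 1, by omega, by omega, by ring⟩
      · exact ⟨1, 1, 1, by omega, by omega, by ring⟩
    | zero => exact ⟨0, 0, 0, le_refl _, le_refl _, by ring⟩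
    | add x y hx hy ihx ihy =>
      obtain ⟨k, a, b, ha, hb, rfl⟩ := ihx
      obtain ⟨k', a', b', ha', hb', rfl⟩ := ihy
      exact ⟨k + k', a + a', b + b', by omega, by omega, by ring⟩
  · rintro ⟨k, a, b, ha, hb, rfl⟩; exact rep_mem n k a b ha hb

variable (n : ℕ) (hn : 3 ≤ n)

include hn

lemma mult_eq : multiplicityN (T n) = n ^ 2 := by
  have hmem : n ^ 2 ∈ {s ∈ T n | 0 < s} := by
    have hn0 : 0 < n := by omega
    refine ⟨?_, by positivity⟩
    rw [mem_S]; exact ⟨1, 0, 0, by omega, by omega, by ring⟩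
  apply le_antisymm
  · exact Nat.sInf_le hmem
  · apply le_csInf ⟨_, hmem⟩
    rintro s ⟨hs, hpos⟩
    rw [mem_S] at hs
    obtain ⟨k, a, b, ha, hb, rfl⟩ := hs
    have hk : 1 ≤ k := by
      rcases Nat.eq_zero_or_pos k with rfl | h
      · obtain rfl : a = 0 := by omega
        obtain rfl : b = 0 := by omega
        simp at hpos
      · exact h
    calc n ^ 2 = 1 * n ^ 2 := by ring
    _ ≤ k * n ^ 2 := Nat.mul_le_mul_right _ hk
    _ ≤ k * n ^ 2 + b * n + a := by omega

lemma mem_of_big : ∀ m, (n - 1) * n ^ 2 ≤ m → m ∈ T n := by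
  intro m hm
  rw [mem_S]
  have hn2 : 0 < n ^ 2 := by positivity
  have hk : n - 1 ≤ m / n ^ 2 := by
    rw [Nat.le_div_iff_mul_le hn2]; exact hm
  have ha : m % n ^ 2 % n < n := Nat.mod_lt _ (by omega)
  have hb : m % n ^ 2 / n < n := by
    rw [Nat.div_lt_iff_lt_mul (by omega)]
    calc m % n ^ 2 < n ^ 2 := Nat.mod_lt _ hn2
    _ = n * n := by ring
  refine ⟨m / n ^ 2, m % n ^ 2 % n, m % n ^ 2 / n, by omega, by omega, ?_⟩
  have e1 := Nat.div_add_mod m (n ^ 2)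
  have e2 := Nat.div_add_mod (m % n ^ 2) n
  nlinarith [e1, e2]

lemma not_mem_pred : ¬ ((n - 1) * n ^ 2 - 1 ∈ T n) := by
  rw [mem_S]
  rintro ⟨k, a, b, ha, hb, heq⟩
  have hc : 1 ≤ (n - 1) * n ^ 2 := by
    have : 1 * 1 ≤ (n - 1) * n ^ 2 := Nat.mul_le_mul (by omega) (by nlinarith)
    omega
  have heq' : k * n ^ 2 + b * n + a + 1 = (n - 1) * n ^ 2 := by omega
  rcases le_or_gt (n - 1) k with h | h
  · have : (n - 1) * n ^ 2 ≤ k * n ^ 2 := Nat.mul_le_mul_right _ h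
    omega
  · have hk2 : k ≤ n - 2 := by omega
    have h2 : (n - 2) + 1 = n - 1 := by omega
    have hkb : b ≤ n - 2 := le_trans hb hk2
    have hka : a ≤ n - 2 := le_trans ha hk2
    have hx : k * n ^ 2 ≤ (n - 2) * n ^ 2 := Nat.mul_le_mul_right _ hk2
    have hy : b * n ≤ (n - 2) * n := Nat.mul_le_mul_right _ hkb
    have key : (n - 2) * n ^ 2 + (n - 2) * n + (n - 2) + 1 < (n - 1) * n ^ 2 := by
      have h3 : (n - 1) * n ^ 2 = (n - 2) * n ^ 2 + n ^ 2 := by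
        rw [← h2, Nat.add_mul]; ring
      rw [h3]
      have : (n - 2) * n + (n - 2) + 1 < n ^ 2 := by
        have : (n - 2) * n + (n - 2) + 1 ≤ (n - 2) * n + n := by omega
        have h4 : (n - 2) * n + n = (n - 1) * n := by
          rw [← h2, Nat.add_mul]; ring
        have h5 : (n - 1) * n < n * n := by
          apply Nat.mul_lt_mul_of_lt_of_le (by omega) (le_refl n) (by omega)
        have h6 : n * n = n ^ 2 := by ring
        omega
      omega
    omega

lemma cond_eq : conductorN (T n) = (n - 1) * n ^ 2 := by
  have hmem : (n - 1) * n ^ 2 ∈ {m : ℕ | ∀ x : ℕ, m ≤ x → x ∈ T n} := by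
    intro x hx; exact mem_of_big n hn x hx
  apply le_antisymm
  · exact Nat.sInf_le hmem
  · apply le_csInf ⟨_, hmem⟩
    intro m hm
    by_contra h
    push_neg at h
    have hc : 1 ≤ (n - 1) * n ^ 2 := by
      have : 1 * 1 ≤ (n - 1) * n ^ 2 := Nat.mul_le_mul (by omega) (by nlinarith)
      omega
    have h1 : m ≤ (n - 1) * n ^ 2 - 1 := by omega
    exact not_mem_pred n hn (hm _ h1)

lemma cube_eq : (n - 1) * n ^ 2 + n ^ 2 = n ^ 3 := by
  have h : (n - 1) + 1 = n := by omega
  calc (n - 1) * n ^ 2 + n ^ 2 = ((n - 1) + 1) * n ^ 2 := by ring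
  _ = n * n ^ 2 := by rw [h]
  _ = n ^ 3 := by ring

lemma apery_lt (x : ℕ) (hx : x ∈ aperySet (T n)) : x < n ^ 3 := by
  obtain ⟨hx1, hx2⟩ := hx
  by_contra hge
  push_neg at hge
  have hc := cube_eq n hn
  have ht : x - n ^ 2 ∈ T n := mem_of_big n hn _ (by omega)
  exact hx2 _ ht (by rw [mult_eq n hn]; omega)

lemma apery_rep (x : ℕ) (hx : x ∈ aperySet (T n)) :
    ∃ a b, a ≤ n - 1 ∧ b ≤ n - 1 ∧ x = max a b * n ^ 2 + b * n + a := by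
  have hlt := apery_lt n hn x hx
  obtain ⟨hx1, hx2⟩ := hx
  rw [mem_S] at hx1
  obtain ⟨k, a, b, ha, hb, rfl⟩ := hx1
  have hk : k = max a b := by
    rcases le_or_gt k (max a b) with h | h
    · omega
    · exfalso
      have ha' : a ≤ k - 1 := by omega
      have hb' : b ≤ k - 1 := by omega
      have ht : (k - 1) * n ^ 2 + b * n + a ∈ T n :=
        (mem_S n _).mpr ⟨k - 1, a, b, ha', hb', rfl⟩
      have hk1 : (k - 1) + 1 = k := by omega
      have heq : k * n ^ 2 + b * n + a = ((k - 1) * n ^ 2 + b * n + a) + n ^ 2 := by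
        calc k * n ^ 2 + b * n + a = ((k - 1) + 1) * n ^ 2 + b * n + a := by rw [hk1]
        _ = ((k - 1) * n ^ 2 + b * n + a) + n ^ 2 := by ring
      exact hx2 _ ht (by rw [mult_eq n hn]; exact heq)
  have hmax : max a b ≤ n - 1 := by
    by_contra h
    push_neg at h
    have hkn : n ≤ k := by omega
    have : n * n ^ 2 ≤ k * n ^ 2 := Nat.mul_le_mul_right _ hkn
    have h3 : n * n ^ 2 = n ^ 3 := by ring
    omega
  exact ⟨a, b, by omega, by omega, by rw [hk]⟩

lemma small_lt (a b : ℕ) (ha : a ≤ n - 1) (hb : b ≤ n - 1) : b * n + a < n ^ 2 := by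
  have h1 : b * n ≤ (n - 1) * n := Nat.mul_le_mul_right _ hb
  have h2 : (n - 1) * n + n = n ^ 2 := by
    have h : (n - 1) + 1 = n := by omega
    calc (n - 1) * n + n = ((n - 1) + 1) * n := by ring
    _ = n * n := by rw [h]
    _ = n ^ 2 := by ring
  omega

lemma div_eq (M r : ℕ) (hr : r < n ^ 2) : (M * n ^ 2 + r) / n ^ 2 = M := by
  have h0 : 0 < n ^ 2 := by positivity
  rw [mul_comm, Nat.mul_add_div h0, Nat.div_eq_of_lt hr, add_zero]

lemma rho_eq : ((conductorN (T n) ⌈/⌉ multiplicityN (T n)) * multiplicityN (T n)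
    - conductorN (T n)) = 0 := by
  rw [mult_eq n hn, cond_eq n hn, Nat.ceilDiv_eq_add_pred_div]
  have h0 : 0 < n ^ 2 := by positivity
  have h1 : (n - 1) * n ^ 2 + n ^ 2 - 1 = (n - 1) * n ^ 2 + (n ^ 2 - 1) := by omega
  rw [h1, div_eq n hn _ _ (by omega), Nat.sub_self]

lemma grade (x y i j : ℕ) (hx : x ∈ aperySet (T n)) (hy : y ∈ aperySet (T n))
    (hxy : x + y ∈ aperySet (T n)) (hi : x / n ^ 2 = i) (hj : y / n ^ 2 = j) :
    (x + y) / n ^ 2 = i + j := by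
  obtain ⟨a, b, ha, hb, rfl⟩ := apery_rep n hn x hx
  obtain ⟨c, d, hc, hd, rfl⟩ := apery_rep n hn y hy
  have hlt := apery_lt n hn _ hxy
  have hab := small_lt n hn a b ha hb
  have hcd := small_lt n hn c d hc hd
  have e1 : max a b * n ^ 2 + b * n + a = max a b * n ^ 2 + (b * n + a) := by ring
  have e2 : max c d * n ^ 2 + d * n + c = max c d * n ^ 2 + (d * n + c) := by ring
  rw [e1, div_eq n hn _ _ hab] at hi
  rw [e2, div_eq n hn _ _ hcd] at hj
  have esum : (max a b * n ^ 2 + b * n + a) + (max c d * n ^ 2 + d * n + c)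
      = (max a b + max c d) * n ^ 2 + ((b + d) * n + (a + c)) := by ring
  have hs : (b + d) * n + (a + c) < n ^ 2 := by
    by_contra hs'
    push_neg at hs'
    have hbd : n - 1 ≤ b + d := by
      by_contra h
      push_neg at h
      have h1 : b + d ≤ n - 2 := by omega
      have h2 : (b + d) * n ≤ (n - 2) * n := Nat.mul_le_mul_right _ h1
      have h3 : (n - 2) * n + n + n = n ^ 2 := by
        have h : (n - 2) + 2 = n := by omega
        calc (n - 2) * n + n + n = ((n - 2) + 2) * n := by ring
        _ = n * n := by rw [h]
        _ = n ^ 2 := by ring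
      omega
    have h4 : n - 1 ≤ max a b + max c d := by
      have := le_max_right a b
      have := le_max_right c d
      omega
    have h5 : (n - 1) * n ^ 2 ≤ (max a b + max c d) * n ^ 2 := Nat.mul_le_mul_right _ h4
    have hc3 := cube_eq n hn
    omega
  rw [esum, div_eq n hn _ _ hs, hi, hj]

end Stmt17Aux

theorem stmt_17 (n : ℕ) (hn : 3 ≤ n)
    (S : Set ℕ)
    (hS : S = (AddSubmonoid.closure {n ^ 2, n ^ 2 + 1, n ^ 2 + n, n ^ 2 + n + 1} :
      AddSubmonoid ℕ)) :
    IsAGraded S ∧ multiplicityN S = n ^ 2 ∧ conductorN S = (n - 1) * n ^ 2 := by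
  have hT : S = Stmt17Aux.T n := hS
  subst hT
  refine ⟨?_, Stmt17Aux.mult_eq n hn, Stmt17Aux.cond_eq n hn⟩
  intro i j x hx y hy hxy
  obtain ⟨hx1, hx2⟩ := hx
  obtain ⟨hy1, hy2⟩ := hy
  refine ⟨hxy, ?_⟩
  rw [Stmt17Aux.rho_eq n hn, add_zero, Stmt17Aux.mult_eq n hn] at hx2 hy2 ⊢
  exact Stmt17Aux.grade n hn x y i j hx1 hy1 hxy hx2 hy2
end

section
/- For every integer n ≥ 3, the numerical semigroup S = ⟨n², n²+1, n²+n, n²+n+1⟩ satisfies Wilf's inequality with embedding dimension 4: (3+1)·Ω ≤ 3·c, i.e., Ω/c ≤ 3/4, where Ω := #(ℕ \ S) and c is the conductor of S. -/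
/-- Auxiliary: sum of squares formula. -/
lemma sumsq_aux (M : ℕ) : 6 * ∑ k ∈ Finset.range M, (k+1)^2 = M*(M+1)*(2*M+1) := by
  induction M with
  | zero => simp
  | succ M ih => rw [Finset.sum_range_succ, Nat.mul_add, ih]; ring

theorem stmt_18 (n : ℕ) (hn : 3 ≤ n)
    (S : Set ℕ)
    (hS : S = (AddSubmonoid.closure {n ^ 2, n ^ 2 + 1, n ^ 2 + n, n ^ 2 + n + 1} :
      AddSubmonoid ℕ)) :
    (3 + 1) * (Set.univ \ S).ncard ≤ 3 * conductorN S := by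
  obtain ⟨m, rfl⟩ : ∃ m, n = m + 3 := ⟨n - 3, by omega⟩
  clear hn
  -- The explicit description of S
  have hSS : S = {x : ℕ | ∃ k p q : ℕ, p ≤ k ∧ q ≤ k ∧ x = k*(m+3)^2 + p*(m+3) + q} := by
    apply le_antisymm
    · rw [hS]
      intro x hx
      refine AddSubmonoid.closure_induction ?_ ?_ ?_ hx
      · intro y hy
        simp only [Set.mem_insert_iff, Set.mem_singleton_iff] at hy
        rcases hy with rfl | rfl | rfl | rfl
        · exact ⟨1, 0, 0, by omega, by omega, by ring⟩
        · exact ⟨1, 0, 1, by omega, by omega, by ring⟩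
        · exact ⟨1, 1, 0, by omega, by omega, by ring⟩
        · exact ⟨1, 1, 1, by omega, by omega, by ring⟩
      · exact ⟨0, 0, 0, le_refl 0, le_refl 0, by ring⟩
      · rintro a b _ _ ⟨k,p,q,hp,hq,rfl⟩ ⟨k',p',q',hp',hq',rfl⟩
        exact ⟨k+k', p+p', q+q', by omega, by omega, by ring⟩
    · rintro x ⟨k, p, q, hp, hq, rfl⟩
      rw [hS]
      have g1 : (m+3)^2 ∈ AddSubmonoid.closure {(m+3) ^ 2, (m+3) ^ 2 + 1, (m+3) ^ 2 + (m+3), (m+3) ^ 2 + (m+3) + 1} :=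
        AddSubmonoid.subset_closure (by simp)
      have g2 : (m+3)^2+1 ∈ AddSubmonoid.closure {(m+3) ^ 2, (m+3) ^ 2 + 1, (m+3) ^ 2 + (m+3), (m+3) ^ 2 + (m+3) + 1} :=
        AddSubmonoid.subset_closure (by simp)
      have g3 : (m+3)^2+(m+3) ∈ AddSubmonoid.closure {(m+3) ^ 2, (m+3) ^ 2 + 1, (m+3) ^ 2 + (m+3), (m+3) ^ 2 + (m+3) + 1} :=
        AddSubmonoid.subset_closure (by simp)
      have g4 : (m+3)^2+(m+3)+1 ∈ AddSubmonoid.closure {(m+3) ^ 2, (m+3) ^ 2 + 1, (m+3) ^ 2 + (m+3), (m+3) ^ 2 + (m+3) + 1} :=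
        AddSubmonoid.subset_closure (by simp)
      obtain ⟨a, b, c, d, h1, h2, h3⟩ : ∃ a b c d : ℕ, a+b+c+d = k ∧ c+d = p ∧ b+d = q := by
        rcases le_total p q with h | h
        · exact ⟨k - q, q - p, 0, p, by omega, by omega, by omega⟩
        · exact ⟨k - p, 0, p - q, q, by omega, by omega, by omega⟩
      have key : k*(m+3)^2 + p*(m+3) + q = a*((m+3)^2) + b*((m+3)^2+1) + c*((m+3)^2+(m+3)) + d*((m+3)^2+(m+3)+1) := by
        rw [← h1, ← h2, ← h3]; ring
      rw [key]
      have mul_mem : ∀ (x : ℕ), x ∈ AddSubmonoid.closure {(m+3) ^ 2, (m+3) ^ 2 + 1, (m+3) ^ 2 + (m+3), (m+3) ^ 2 + (m+3) + 1} →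
          ∀ a : ℕ, a * x ∈ AddSubmonoid.closure {(m+3) ^ 2, (m+3) ^ 2 + 1, (m+3) ^ 2 + (m+3), (m+3) ^ 2 + (m+3) + 1} := by
        intro x hx a
        simpa [nsmul_eq_mul] using nsmul_mem hx a
      exact add_mem (add_mem (add_mem (mul_mem _ g1 a) (mul_mem _ g2 b)) (mul_mem _ g3 c)) (mul_mem _ g4 d)
  -- every x ≥ (m+2)*(m+3)^2 is in S
  have hlarge : ∀ x : ℕ, (m+2)*(m+3)^2 ≤ x → x ∈ S := by
    intro x hx
    rw [hSS]
    refine ⟨x / (m+3)^2, (x % (m+3)^2) / (m+3), (x % (m+3)^2) % (m+3), ?_, ?_, ?_⟩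
    · have hk : m + 2 ≤ x / (m+3)^2 := Nat.le_div_iff_mul_le (by positivity) |>.mpr hx
      have hr : x % (m+3)^2 < (m+3)^2 := Nat.mod_lt _ (by positivity)
      have : (x % (m+3)^2) / (m+3) < (m+3) := Nat.div_lt_iff_lt_mul (by omega) |>.mpr (by
        calc x % (m+3)^2 < (m+3)^2 := hr
        _ = (m+3) * (m+3) := by ring)
      omega
    · have hk : m + 2 ≤ x / (m+3)^2 := Nat.le_div_iff_mul_le (by positivity) |>.mpr hx
      have : (x % (m+3)^2) % (m+3) < (m+3) := Nat.mod_lt _ (by omega)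
      omega
    · have e1 : (m+3)^2 * (x / (m+3)^2) + x % (m+3)^2 = x := Nat.div_add_mod x ((m+3)^2)
      have e2 : (m+3) * (x % (m+3)^2 / (m+3)) + (x % (m+3)^2) % (m+3) = x % (m+3)^2 := Nat.div_add_mod _ (m+3)
      calc x = (m+3)^2 * (x / (m+3)^2) + x % (m+3)^2 := e1.symm
      _ = (m+3)^2 * (x / (m+3)^2) + ((m+3) * (x % (m+3)^2 / (m+3)) + (x % (m+3)^2) % (m+3)) := by rw [e2]
      _ = (x / (m+3)^2)*(m+3)^2 + (x % (m+3)^2 / (m+3))*(m+3) + (x % (m+3)^2) % (m+3) := by ring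
  -- the gap
  have hgap : ((m+2)*(m+3)^2 - 1) ∉ S := by
    rw [hSS]
    rintro ⟨k, p, q, hp, hq, hx⟩
    have hN1 : 0 < (m+2)*(m+3)^2 := by positivity
    have he : k*(m+3)^2 + p*(m+3) + q + 1 = (m+2)*(m+3)^2 := by
      rw [← hx, Nat.sub_add_cancel hN1]
    have hk : k ≤ m + 1 := by
      by_contra hk
      push_neg at hk
      have h1 : (m+2)*(m+3)^2 ≤ k*(m+3)^2 := Nat.mul_le_mul_right _ (by omega)
      rw [← he] at h1
      omega
    have h2 : k*(m+3)^2 ≤ (m+1)*(m+3)^2 := Nat.mul_le_mul_right _ hk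
    have h3 : p*(m+3) ≤ (m+1)*(m+3) := Nat.mul_le_mul_right _ (by omega)
    have h4 : (m+2)*(m+3)^2 = (m+1)*(m+3)^2 + (m+3)^2 := by ring
    have h5 : (m+1)*(m+3) + (m+1) + 1 < (m+3)^2 := by nlinarith
    have hq' : q ≤ m + 1 := le_trans hq hk
    omega
  -- conductor lower bound
  have hne : {c : ℕ | ∀ j : ℕ, c ≤ j → j ∈ S}.Nonempty := ⟨(m+2)*(m+3)^2, fun j hj => hlarge j hj⟩
  have hmem := Nat.sInf_mem hne
  have hcond : (m+2)*(m+3)^2 ≤ conductorN S := by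
    by_contra h
    push_neg at h
    have hle : conductorN S ≤ (m+2)*(m+3)^2 - 1 := Nat.le_sub_one_of_lt h
    exact hgap (hmem _ hle)
  -- the finset of small elements of S
  set T : Finset ℕ := (Finset.range (m+2)).biUnion
      (fun k => ((Finset.range (k+1)) ×ˢ (Finset.range (k+1))).image
        (fun pq => k*(m+3)^2 + pq.1*(m+3) + pq.2)) with hT
  -- T is contained in S
  have hTS : ∀ x ∈ T, x ∈ S := by
    intro x hx
    rw [hT] at hx
    simp only [Finset.mem_biUnion, Finset.mem_image, Finset.mem_product, Finset.mem_range] at hx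
    obtain ⟨k, hk, ⟨p, q⟩, ⟨hp, hq⟩, rfl⟩ := hx
    rw [hSS]
    exact ⟨k, p, q, by omega, by omega, rfl⟩
  -- T is contained in range
  have hTrange : T ⊆ Finset.range ((m+2)*(m+3)^2) := by
    intro x hx
    rw [hT] at hx
    simp only [Finset.mem_biUnion, Finset.mem_image, Finset.mem_product, Finset.mem_range] at hx
    obtain ⟨k, hk, ⟨p, q⟩, ⟨hp, hq⟩, rfl⟩ := hx
    simp only [Finset.mem_range]
    have h2 : k*(m+3)^2 ≤ (m+1)*(m+3)^2 := Nat.mul_le_mul_right _ (by omega)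
    have h3 : p*(m+3) ≤ (m+1)*(m+3) := Nat.mul_le_mul_right _ (by omega)
    have h4 : (m+2)*(m+3)^2 = (m+1)*(m+3)^2 + (m+3)^2 := by ring
    have h5 : (m+1)*(m+3) + (m+1) + 1 < (m+3)^2 := by nlinarith
    omega
  -- cardinality of T
  have hdiv : ∀ k p q : ℕ, k ≤ m+1 → p ≤ m+1 → q ≤ m+1 →
      (k*(m+3)^2 + p*(m+3) + q) / (m+3)^2 = k := by
    intro k p q hk hp hq
    have hr : p*(m+3) + q < (m+3)^2 := by nlinarith
    rw [Nat.add_assoc, Nat.mul_comm k, Nat.mul_add_div (by positivity), Nat.div_eq_of_lt hr]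
    omega
  have hTcard : T.card = ∑ k ∈ Finset.range (m+2), (k+1)^2 := by
    rw [hT]
    rw [Finset.card_biUnion]
    · apply Finset.sum_congr rfl
      intro k hk
      simp only [Finset.mem_range] at hk
      rw [Finset.card_image_of_injOn, Finset.card_product, Finset.card_range]
      · ring
      · rintro ⟨p1, q1⟩ h1 ⟨p2, q2⟩ h2 hpq
        simp only [Finset.mem_coe, Finset.mem_product, Finset.mem_range] at h1 h2
        simp only [Prod.mk.injEq] at hpq ⊢
        have heq : p1*(m+3) + q1 = p2*(m+3) + q2 := by
          have h5 : k*(m+3)^2 + (p1*(m+3) + q1) = k*(m+3)^2 + (p2*(m+3) + q2) := by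
            rw [← Nat.add_assoc, ← Nat.add_assoc]; exact hpq
          exact Nat.add_left_cancel h5
        have hq : q1 = q2 := by
          have h3 := congrArg (· % (m+3)) heq
          simp only [Nat.mul_add_mod'] at h3
          rwa [Nat.mod_eq_of_lt (by omega), Nat.mod_eq_of_lt (by omega)] at h3
        subst hq
        have h4 : p1 * (m+3) = p2 * (m+3) := Nat.add_right_cancel heq
        exact ⟨Nat.eq_of_mul_eq_mul_right (by omega) h4, rfl⟩
    · intro k1 hk1 k2 hk2 hne12
      simp only [Finset.mem_coe, Finset.mem_range] at hk1 hk2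
      apply Finset.disjoint_left.mpr
      intro x hx1 hx2
      simp only [Finset.mem_image, Finset.mem_product, Finset.mem_range] at hx1 hx2
      obtain ⟨⟨p1, q1⟩, ⟨hp1, hq1⟩, he1⟩ := hx1
      obtain ⟨⟨p2, q2⟩, ⟨hp2, hq2⟩, he2⟩ := hx2
      apply hne12
      have d1 : x / (m+3)^2 = k1 := by rw [← he1]; exact hdiv _ _ _ (by omega) (by omega) (by omega)
      have d2 : x / (m+3)^2 = k2 := by rw [← he2]; exact hdiv _ _ _ (by omega) (by omega) (by omega)
      omega
  -- bound on the number of gaps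
  have hcompl : (Set.univ \ S) ⊆ ↑(Finset.range ((m+2)*(m+3)^2) \ T) := by
    intro x hx
    obtain ⟨-, hxS⟩ := hx
    simp only [Finset.coe_sdiff, Set.mem_diff, Finset.mem_coe, Finset.mem_range]
    constructor
    · by_contra h
      push_neg at h
      exact hxS (hlarge x h)
    · intro hxT
      exact hxS (hTS x hxT)
  have hΩ : (Set.univ \ S).ncard ≤ (Finset.range ((m+2)*(m+3)^2) \ T).card := by
    rw [← Set.ncard_coe_finset]
    exact Set.ncard_le_ncard hcompl (Finset.finite_toSet _)
  have hsd : (Finset.range ((m+2)*(m+3)^2) \ T).card = (m+2)*(m+3)^2 - T.card :=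
    (Finset.card_sdiff_of_subset hTrange).trans (by rw [Finset.card_range])
  -- final arithmetic
  have hkey : (m+2)*(m+3)^2 ≤ 4 * T.card := by
    rw [hTcard]
    have h6 := sumsq_aux (m+2)
    nlinarith [h6]
  obtain ⟨C, hC⟩ : ∃ C, (m+2)*(m+3)^2 = C := ⟨_, rfl⟩
  obtain ⟨t, ht⟩ : ∃ t, T.card = t := ⟨_, rfl⟩
  rw [hC] at hcond hΩ hsd
  rw [ht] at hsd hkey
  rw [hC] at hkey
  omega
end

section
/- For every integer p ≥ 9, the numerical semigroup S generated by p, 2p+1, 2p+3, 3p+4 is A-graded, and its conductor equals c = ⌊2p/3⌋·p. -/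
namespace S19
def m (r : ℕ) : ℕ :=
  if r = 1 then 2 else if r = 2 then 4 else if r = 5 then 5 else 2*(r/3) + r%3

lemma m_sub (r s : ℕ) : m (r+s) ≤ m r + m s := by
  unfold m; split_ifs <;> omega

lemma m_low (r : ℕ) : 2*r ≤ 3 * m r := by unfold m; split_ifs <;> omega
lemma m_high (r : ℕ) : 3 * m r ≤ 2*r + 8 := by unfold m; split_ifs <;> omega

lemma m_wrap {p r s t : ℕ} (hp : 9 ≤ p) (h : t + p = r + s) : m t + 1 ≤ m r + m s := by
  have h1 := m_low r; have h2 := m_low s; have h3 := m_high t; omega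

lemma m_rep (r : ℕ) : ∃ a b c : ℕ, a + 3*b + 4*c = r ∧ 2*a + 2*b + 3*c = m r := by
  refine ⟨if r = 1 then 1 else if r = 2 then 2 else if r = 5 then 1 else 0,
    (r - (if r = 1 then 1 else if r = 2 then 2 else if r = 5 then 1 else 0)
      - 4*(if r = 1 ∨ r = 2 then 0 else if r = 5 then 1 else if r % 3 = 1 then 1 else if r % 3 = 2 then 2 else 0))/3,
    (if r = 1 ∨ r = 2 then 0 else if r = 5 then 1 else if r % 3 = 1 then 1 else if r % 3 = 2 then 2 else 0),
    ?_, ?_⟩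
  all_goals first | (split_ifs <;> omega) | (unfold m; split_ifs <;> omega)

/-- decomposition uniqueness -/
lemma decomp_unique {p q1 r1 q2 r2 : ℕ} (hp : 0 < p) (h1 : r1 < p) (h2 : r2 < p)
    (h : p*q1 + r1 = p*q2 + r2) : q1 = q2 ∧ r1 = r2 := by
  have e1 : (p*q1+r1)/p = q1 := by rw [Nat.mul_add_div hp, Nat.div_eq_of_lt h1]; omega
  have e2 : (p*q2+r2)/p = q2 := by rw [Nat.mul_add_div hp, Nat.div_eq_of_lt h2]; omega
  have : q1 = q2 := by rw [← e1, ← e2, h]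
  constructor
  · exact this
  · subst this; omega

lemma mem_iff {p : ℕ} (hp : 9 ≤ p) (n : ℕ) :
    n ∈ (AddSubmonoid.closure {p, 2*p+1, 2*p+3, 3*p+4} : AddSubmonoid ℕ) ↔
      ∃ q r : ℕ, r < p ∧ n = p*q + r ∧ m r ≤ q := by
  constructor
  · intro hn
    induction hn using AddSubmonoid.closure_induction with
    | mem x hx =>
      simp only [Set.mem_insert_iff, Set.mem_singleton_iff] at hx
      rcases hx with h | h | h | h <;> subst h
      · exact ⟨1, 0, by omega, by ring, by simp [m]⟩
      · exact ⟨2, 1, by omega, by ring, by simp [m]⟩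
      · exact ⟨2, 3, by omega, by ring, by simp [m]⟩
      · exact ⟨3, 4, by omega, by ring, by simp [m]⟩
    | zero => exact ⟨0, 0, by omega, by ring, by simp [m]⟩
    | add x y hx hy ihx ihy =>
      obtain ⟨q1, r1, hr1, he1, hm1⟩ := ihx
      obtain ⟨q2, r2, hr2, he2, hm2⟩ := ihy
      by_cases hc : r1 + r2 < p
      · exact ⟨q1+q2, r1+r2, hc, by subst he1 he2; ring, by
          have := m_sub r1 r2; omega⟩
      · refine ⟨q1+q2+1, r1+r2-p, by omega, by
          subst he1 he2
          have hpe : p*(q1+q2+1) = p*q1+p*q2+p := by ring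
          omega, ?_⟩
        have := m_wrap (t := r1+r2-p) hp (by omega : (r1+r2-p) + p = r1 + r2)
        omega
  · rintro ⟨q, r, hr, rfl, hm⟩
    obtain ⟨a, b, c, hres, hcost⟩ := m_rep r
    have key : p*q + r = (q - m r)*p + (a*(2*p+1) + b*(2*p+3) + c*(3*p+4)) := by
      have : a*(2*p+1) + b*(2*p+3) + c*(3*p+4)
          = (2*a+2*b+3*c)*p + (a + 3*b + 4*c) := by ring
      rw [this, hres, hcost]
      have : q - m r + m r = q := by omega
      nlinarith [this]
    rw [key]
    have hmem : ∀ g ∈ ({p, 2*p+1, 2*p+3, 3*p+4} : Set ℕ),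
        g ∈ (AddSubmonoid.closure {p, 2*p+1, 2*p+3, 3*p+4} : AddSubmonoid ℕ) :=
      fun g hg => AddSubmonoid.subset_closure hg
    have h1 := hmem p (by simp)
    have h2 := hmem (2*p+1) (by simp)
    have h3 := hmem (2*p+3) (by simp)
    have h4 := hmem (3*p+4) (by simp)
    refine AddSubmonoid.add_mem _ ?_ (AddSubmonoid.add_mem _ (AddSubmonoid.add_mem _ ?_ ?_) ?_)
    · simpa [smul_eq_mul] using AddSubmonoid.nsmul_mem _ h1 (q - m r)
    · simpa [smul_eq_mul] using AddSubmonoid.nsmul_mem _ h2 a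
    · simpa [smul_eq_mul] using AddSubmonoid.nsmul_mem _ h3 b
    · simpa [smul_eq_mul] using AddSubmonoid.nsmul_mem _ h4 c

lemma m_eq_zero {r : ℕ} (h : m r = 0) : r = 0 := by
  have := m_low r; omega

lemma m_lt_bound {p r : ℕ} (hp : 9 ≤ p) (hr : r < p) : m r ≤ 2*p/3 := by
  unfold m; split_ifs <;> omega

lemma m_pm1 {p : ℕ} (hp : 9 ≤ p) : m (p-1) = 2*p/3 := by
  unfold m; split_ifs <;> omega

section Main
variable {p : ℕ} (hp : 9 ≤ p) {S : Set ℕ}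
  (hS : S = (AddSubmonoid.closure {p, 2*p+1, 2*p+3, 3*p+4} : AddSubmonoid ℕ))

include hp hS

lemma memS_iff (n : ℕ) : n ∈ S ↔ ∃ q r : ℕ, r < p ∧ n = p*q + r ∧ m r ≤ q := by
  rw [hS]; exact mem_iff hp n

lemma mult_eq : multiplicityN S = p := by
  have hpmem : p ∈ {s ∈ S | 0 < s} := by
    refine ⟨(memS_iff hp hS p).mpr ⟨1, 0, by omega, by ring, by simp [m]⟩, by omega⟩
  refine le_antisymm (Nat.sInf_le hpmem) (le_csInf ⟨p, hpmem⟩ ?_)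
  rintro s ⟨hsS, hs0⟩
  obtain ⟨q, r, hr, rfl, hm⟩ := (memS_iff hp hS _).mp hsS
  rcases Nat.eq_zero_or_pos q with h | h
  · subst h
    have : m r = 0 := by omega
    have := m_eq_zero this; omega
  · have : p*1 ≤ p*q := Nat.mul_le_mul_left p h
    omega

lemma conductor_eq : conductorN S = 2*p/3*p := by
  have hCmem : (2*p/3*p) ∈ {m : ℕ | ∀ n : ℕ, m ≤ n → n ∈ S} := by
    intro n hn
    refine (memS_iff hp hS n).mpr ⟨n/p, n%p, Nat.mod_lt _ (by omega), (Nat.div_add_mod n p).symm, ?_⟩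
    have h1 : m (n % p) ≤ 2*p/3 := m_lt_bound hp (Nat.mod_lt _ (by omega))
    have h2 : 2*p/3 ≤ n/p := (Nat.le_div_iff_mul_le (by omega)).mpr hn
    omega
  refine le_antisymm (Nat.sInf_le hCmem) (le_csInf ⟨_, hCmem⟩ ?_)
  intro b hb
  by_contra hlt
  push_neg at hlt
  obtain ⟨k', hkk⟩ : ∃ k', 2*p/3 = k' + 1 := ⟨2*p/3 - 1, by omega⟩
  have h1 : (k'+1)*p = p*k' + p := by ring
  have hCd : 2*p/3*p - 1 = p*k' + (p-1) := by rw [hkk]; omega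
  have hmem : 2*p/3*p - 1 ∈ S := hb _ (by omega)
  rw [hCd] at hmem
  obtain ⟨q, r, hr, he, hm⟩ := (memS_iff hp hS _).mp hmem
  obtain ⟨hq, hr9⟩ := decomp_unique (p := p) (by omega) (by omega) hr he
  have := m_pm1 (p := p) hp
  subst hr9
  omega

lemma apery_iff (a : ℕ) : a ∈ aperySet S ↔ ∃ r, r < p ∧ a = p * m r + r := by
  rw [aperySet, mult_eq hp hS]
  constructor
  · rintro ⟨haS, hnot⟩
    obtain ⟨q, r, hr, rfl, hm⟩ := (memS_iff hp hS _).mp haS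
    rcases Nat.lt_or_ge (m r) q with h | h
    · obtain ⟨q', rfl⟩ : ∃ q', q = q' + 1 := ⟨q-1, by omega⟩
      exfalso
      refine hnot (p*q' + r) ((memS_iff hp hS _).mpr ⟨q', r, hr, rfl, by omega⟩) ?_
      have h2 : p*(q'+1) = p*q' + p := by ring
      omega
    · have hqe : q = m r := by omega
      exact ⟨r, hr, by rw [hqe]⟩
  · rintro ⟨r, hr, rfl⟩
    refine ⟨(memS_iff hp hS _).mpr ⟨m r, r, hr, rfl, le_refl _⟩, ?_⟩
    rintro t htS heq
    obtain ⟨q', r', hr', rfl, hm'⟩ := (memS_iff hp hS _).mp htS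
    have h2 : p*(q'+1) = p*q' + p := by ring
    have he2 : p * m r + r = p*(q'+1) + r' := by omega
    obtain ⟨hq, hre⟩ := decomp_unique (p := p) (by omega) hr hr' he2
    subst hre
    omega

lemma piece_iff (a i : ℕ) : a ∈ aperyPiece S i ↔ a ∈ aperySet S ∧ a / p = i := by
  have hrho : (conductorN S ⌈/⌉ multiplicityN S) * multiplicityN S - conductorN S = 0 := by
    rw [conductor_eq hp hS, mult_eq hp hS, Nat.ceilDiv_eq_add_pred_div]
    have e1 : (2*p/3*p + p - 1) / p = 2*p/3 := by
      have h0 : 2*p/3*p = p*(2*p/3) := by ring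
      have h1 : 2*p/3*p + p - 1 = p*(2*p/3) + (p-1) := by omega
      rw [h1, Nat.mul_add_div (by omega), Nat.div_eq_of_lt (show p-1 < p by omega), Nat.add_zero]
    rw [e1]
    exact Nat.sub_self _
  rw [aperyPiece, mult_eq hp hS] at *
  simp only [Set.mem_setOf_eq]
  rw [hrho, Nat.add_zero]

lemma graded : IsAGraded S := by
  intro i j a ha b hb hab
  obtain ⟨haA, hai⟩ := (piece_iff hp hS a i).mp ha
  obtain ⟨hbA, hbj⟩ := (piece_iff hp hS b j).mp hb
  obtain ⟨r, hr, rfl⟩ := (apery_iff hp hS a).mp haA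
  obtain ⟨s, hs, rfl⟩ := (apery_iff hp hS b).mp hbA
  have hdiv : ∀ k t : ℕ, t < p → (p*k + t)/p = k := by
    intro k t ht
    rw [Nat.mul_add_div (by omega), Nat.div_eq_of_lt ht, Nat.add_zero]
  rw [hdiv _ _ hr] at hai
  rw [hdiv _ _ hs] at hbj
  refine (piece_iff hp hS _ _).mpr ⟨hab, ?_⟩
  rcases Nat.lt_or_ge (r + s) p with hc | hc
  · have he : p * m r + r + (p * m s + s) = p*(m r + m s) + (r+s) := by ring
    rw [he, hdiv _ _ hc]; omega
  · exfalso
    obtain ⟨t, ht, hte⟩ := (apery_iff hp hS _).mp hab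
    have h1 : p*(m r + m s + 1) = p*(m r) + p*(m s) + p := by ring
    have he : p * m r + r + (p * m s + s) = p*(m r + m s + 1) + (r+s-p) := by omega
    rw [he] at hte
    obtain ⟨hq, hre⟩ := decomp_unique (p := p) (by omega) ht (by omega) hte.symm
    subst hre
    have := m_wrap (t := r+s-p) hp (by omega : (r+s-p) + p = r + s)
    omega

end Main
end S19

theorem stmt_19 (p : ℕ) (hp : 9 ≤ p)
    (S : Set ℕ)
    (hS : S = (AddSubmonoid.closure {p, 2 * p + 1, 2 * p + 3, 3 * p + 4} :
      AddSubmonoid ℕ)) :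
    IsAGraded S ∧ conductorN S = (2 * p / 3) * p :=
  ⟨S19.graded hp hS, S19.conductor_eq hp hS⟩
end
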